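/- If x = j/2^N ∈ [0,1) is a dyadic rational and 1/2 < a < 1, then the right-hand derivative of L_a at x equals +∞. -/

import Mathlib

open Topology Filter Set

/-- The de Rham functional equation characterizing Lebesgue's singular function `L_a`
on `[0,1]`, together with continuity. -/
def deRham (a : ℝ) (L : ℝ → ℝ) : Prop :=
  ContinuousOn L (Set.Icc 0 1) ∧
  (∀ x ∈ Set.Icc (0:ℝ) (1/2), L x = a * L (2*x)) ∧
  (∀ x ∈ Set.Icc (1/2:ℝ) 1, L x = (1-a) * L (2*x - 1) + a)

section Aux

variable {a : ℝ} {L : ℝ → ℝ}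

lemma myLzero (ha1 : a < 1)
    (h1 : ∀ x ∈ Set.Icc (0:ℝ) (1/2), L x = a * L (2*x)) : L 0 = 0 := by
  have h : L 0 = a * L 0 := by simpa using h1 0 (by constructor <;> norm_num)
  have h' : L 0 * (1 - a) = 0 := by linear_combination h
  rcases mul_eq_zero.1 h' with h'' | h''
  · exact h''
  · linarith

lemma myLone (ha0 : 1/2 < a)
    (h2 : ∀ x ∈ Set.Icc (1/2:ℝ) 1, L x = (1-a) * L (2*x - 1) + a) : L 1 = 1 := by
  have h := h2 1 (by constructor <;> norm_num)
  norm_num at h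
  have h' : (L 1 - 1) * a = 0 := by linear_combination h
  rcases mul_eq_zero.1 h' with h'' | h''
  · linarith
  · linarith

lemma myStepL (h1 : ∀ x ∈ Set.Icc (0:ℝ) (1/2), L x = a * L (2*x))
    (n m : ℕ) (hm : m < 2^n) :
    L ((m+1)/2^(n+1)) - L (m/2^(n+1)) = a * (L ((m+1)/2^n) - L (m/2^n)) := by
  have h2n : (0:ℝ) < 2^n := by positivity
  have hm' : (m:ℝ) + 1 ≤ 2^n := by exact_mod_cast Nat.succ_le_of_lt hm
  have e1 := h1 ((m:ℝ)/2^(n+1)) ⟨by positivity, by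
    rw [div_le_div_iff₀ (by positivity) (by norm_num)]
    rw [pow_succ]; ring_nf; nlinarith⟩
  have e2 := h1 (((m:ℝ)+1)/2^(n+1)) ⟨by positivity, by
    rw [div_le_div_iff₀ (by positivity) (by norm_num)]
    rw [pow_succ]; ring_nf; nlinarith⟩
  have r1 : 2 * ((m:ℝ)/2^(n+1)) = m/2^n := by
    rw [pow_succ]; field_simp
  have r2 : 2 * (((m:ℝ)+1)/2^(n+1)) = (m+1)/2^n := by
    rw [pow_succ]; field_simp
  rw [r1] at e1; rw [r2] at e2
  rw [e1, e2]; ring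

lemma myStepR (h2 : ∀ x ∈ Set.Icc (1/2:ℝ) 1, L x = (1-a) * L (2*x - 1) + a)
    (n r : ℕ) (hr : r < 2^n) :
    L ((2^n + r + 1)/2^(n+1)) - L ((2^n + r)/2^(n+1))
      = (1-a) * (L ((r+1)/2^n) - L (r/2^n)) := by
  have h2n : (0:ℝ) < 2^n := by positivity
  have hr' : (r:ℝ) + 1 ≤ 2^n := by exact_mod_cast Nat.succ_le_of_lt hr
  have e1 := h2 (((2:ℝ)^n + r)/2^(n+1)) ⟨by
      rw [div_le_div_iff₀ (by norm_num) (by positivity)]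
      rw [pow_succ]; ring_nf; nlinarith, by
      rw [div_le_one (by positivity)]
      rw [pow_succ]; nlinarith⟩
  have e2 := h2 (((2:ℝ)^n + r + 1)/2^(n+1)) ⟨by
      rw [div_le_div_iff₀ (by norm_num) (by positivity)]
      rw [pow_succ]; ring_nf; nlinarith, by
      rw [div_le_one (by positivity)]
      rw [pow_succ]; nlinarith⟩
  have r1 : 2 * (((2:ℝ)^n + r)/2^(n+1)) - 1 = r/2^n := by
    rw [pow_succ]; field_simp; ring
  have r2 : 2 * (((2:ℝ)^n + r + 1)/2^(n+1)) - 1 = (r+1)/2^n := by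
    rw [pow_succ]; field_simp; ring
  rw [r1] at e1; rw [r2] at e2
  rw [e1, e2]; ring

lemma myDpos (ha0 : 1/2 < a) (ha1 : a < 1)
    (h1 : ∀ x ∈ Set.Icc (0:ℝ) (1/2), L x = a * L (2*x))
    (h2 : ∀ x ∈ Set.Icc (1/2:ℝ) 1, L x = (1-a) * L (2*x - 1) + a) :
    ∀ (n k : ℕ), k < 2^n → 0 < L ((k+1)/2^n) - L (k/2^n) := by
  intro n
  induction n with
  | zero =>
    intro k hk
    interval_cases k
    simp [myLzero ha1 h1, myLone ha0 h2]
  | succ n ih =>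
    intro k hk
    by_cases hk2 : k < 2^n
    · rw [show ((k:ℝ)+1) = ((k:ℕ):ℝ)+1 by norm_num, myStepL h1 n k hk2]
      have := ih k hk2
      nlinarith
    · push_neg at hk2
      obtain ⟨r, rfl⟩ := Nat.exists_eq_add_of_le hk2
      have hr : r < 2^n := by
        have : 2^(n+1) = 2^n + 2^n := by ring
        omega
      have e := myStepR h2 n r hr
      have cast1 : ((2^n + r : ℕ) : ℝ) = (2:ℝ)^n + r := by push_cast; ring
      rw [cast1, e]
      have := ih r hr
      nlinarith

lemma myDdouble (h1 : ∀ x ∈ Set.Icc (0:ℝ) (1/2), L x = a * L (2*x))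
    (h2 : ∀ x ∈ Set.Icc (1/2:ℝ) 1, L x = (1-a) * L (2*x - 1) + a) :
    ∀ (n m : ℕ), m < 2^n →
    L ((2*m+1)/2^(n+1)) - L ((2*m)/2^(n+1)) = a * (L ((m+1)/2^n) - L (m/2^n)) := by
  intro n
  induction n with
  | zero =>
    intro m hm
    interval_cases m
    have := myStepL h1 0 0 (by norm_num)
    norm_num at this ⊢
    try exact this
    try linarith [this]
  | succ n ih =>
    intro m hm
    by_cases hm2 : m < 2^n
    · have h2m : 2*m < 2^(n+1) := by omega
      have e1 := myStepL h1 (n+1) (2*m) h2m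
      have e2 := ih m hm2
      have e3 := myStepL h1 n m hm2
      push_cast at e1 e2 e3 ⊢
      rw [e1, e2, e3]
      try ring
    · push_neg at hm2
      obtain ⟨r, rfl⟩ := Nat.exists_eq_add_of_le hm2
      have hr : r < 2^n := by
        have : 2^(n+1) = 2^n + 2^n := by ring
        omega
      have h2r : 2*r < 2^(n+1) := by omega
      have e1 := myStepR h2 (n+1) (2*r) h2r
      have e2 := ih r hr
      have e3 := myStepR h2 n r hr
      push_cast at e1
      have A1 : (2*(((2^n+r:ℕ)):ℝ)+1)/2^(n+1+1) = ((2:ℝ)^(n+1) + 2*(r:ℝ) + 1)/2^(n+1+1) := by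
        push_cast; ring
      have A2 : (2*(((2^n+r:ℕ)):ℝ))/2^(n+1+1) = ((2:ℝ)^(n+1) + 2*(r:ℝ))/2^(n+1+1) := by
        push_cast; ring
      have A3 : ((((2^n+r:ℕ)):ℝ)+1)/2^(n+1) = ((2:ℝ)^n + (r:ℝ) + 1)/2^(n+1) := by
        push_cast; ring
      have A4 : ((((2^n+r:ℕ)):ℝ))/2^(n+1) = ((2:ℝ)^n + (r:ℝ))/2^(n+1) := by
        push_cast; ring
      rw [A1, A2, A3, A4, e1, e2, e3]
      try ring

lemma myDgeom (h1 : ∀ x ∈ Set.Icc (0:ℝ) (1/2), L x = a * L (2*x))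
    (h2 : ∀ x ∈ Set.Icc (1/2:ℝ) 1, L x = (1-a) * L (2*x - 1) + a)
    (N j : ℕ) (hj : j < 2^N) : ∀ k : ℕ,
    L ((j*2^k+1)/2^(N+k)) - L ((j*2^k)/2^(N+k))
      = a^k * (L ((j+1)/2^N) - L (j/2^N)) := by
  intro k
  induction k with
  | zero => norm_num
  | succ k ih =>
    have h2k : 0 < 2^k := Nat.pow_pos (by norm_num)
    have hjk : j * 2^k < 2^(N+k) := by
      rw [pow_add]
      exact (Nat.mul_lt_mul_right h2k).mpr hj
    have e := myDdouble h1 h2 (N+k) (j*2^k) hjk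
    have A1 : ((j:ℝ)*2^(k+1)+1)/2^(N+(k+1)) = (2*(((j*2^k:ℕ)):ℝ)+1)/2^(N+k+1) := by
      push_cast; rw [pow_succ, ← add_assoc]; ring
    have A2 : ((j:ℝ)*2^(k+1))/2^(N+(k+1)) = (2*(((j*2^k:ℕ)):ℝ))/2^(N+k+1) := by
      push_cast; rw [pow_succ, ← add_assoc]; ring
    have A3 : (((j*2^k:ℕ)):ℝ) = (j:ℝ)*2^k := by push_cast; ring
    rw [A1, A2, e, A3, ih, pow_succ]
    ring

lemma myMonoDyadic (ha0 : 1/2 < a) (ha1 : a < 1)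
    (h1 : ∀ x ∈ Set.Icc (0:ℝ) (1/2), L x = a * L (2*x))
    (h2 : ∀ x ∈ Set.Icc (1/2:ℝ) 1, L x = (1-a) * L (2*x - 1) + a)
    (n : ℕ) : ∀ q : ℕ, q ≤ 2^n → ∀ p : ℕ, p ≤ q →
    L ((p:ℝ)/2^n) ≤ L ((q:ℝ)/2^n) := by
  intro q
  induction q with
  | zero => intro _ p hp; interval_cases p; exact le_rfl
  | succ q ih =>
    intro hq p hp
    rcases eq_or_lt_of_le hp with rfl | h
    · exact le_rfl
    · have hpq : p ≤ q := Nat.lt_succ_iff.mp h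
      have h1' := ih (le_trans (Nat.le_succ q) hq) p hpq
      have h2' := myDpos ha0 ha1 h1 h2 n q (by omega)
      push_cast
      linarith

lemma myMonoL (ha0 : 1/2 < a) (ha1 : a < 1)
    (hc : ContinuousOn L (Set.Icc 0 1))
    (h1 : ∀ x ∈ Set.Icc (0:ℝ) (1/2), L x = a * L (2*x))
    (h2 : ∀ x ∈ Set.Icc (1/2:ℝ) 1, L x = (1-a) * L (2*x - 1) + a) :
    ∀ x ∈ Icc (0:ℝ) 1, ∀ y ∈ Icc (0:ℝ) 1, x ≤ y → L x ≤ L y := by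
  intro x hx y hy hxy
  rcases eq_or_lt_of_le hxy with rfl | hlt
  · exact le_rfl
  have h2n : ∀ n : ℕ, (0:ℝ) < 2^n := fun n => by positivity
  have hhalf : ∀ n : ℕ, ((1:ℝ)/2)^n * 2^n = 1 := fun n => by
    rw [← mul_pow]; norm_num
  set A : ℕ → ℝ := fun n => (⌈x * 2^n⌉ : ℝ)/2^n with hA
  set B : ℕ → ℝ := fun n => (⌊y * 2^n⌋ : ℝ)/2^n with hB
  have hxA : ∀ n, x ≤ A n := fun n => by
    rw [hA, le_div_iff₀ (h2n n)]; exact Int.le_ceil _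
  have hAx : ∀ n, A n ≤ x + (1/2)^n := fun n => by
    rw [hA, div_le_iff₀ (h2n n)]
    have h1' := (Int.ceil_lt_add_one (x * 2^n)).le
    nlinarith [hhalf n]
  have hBy : ∀ n, B n ≤ y := fun n => by
    rw [hB, div_le_iff₀ (h2n n)]; exact Int.floor_le _
  have hyB : ∀ n, y - (1/2)^n ≤ B n := fun n => by
    rw [hB, le_div_iff₀ (h2n n)]
    have h1' := (Int.sub_one_lt_floor (y * 2^n)).le
    nlinarith [hhalf n]
  have hev : ∀ᶠ n in atTop, ⌈x * 2^n⌉ ≤ ⌊y * 2^n⌋ := by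
    have htend : Tendsto (fun n : ℕ => ((1:ℝ)/2)^n) atTop (𝓝 0) :=
      tendsto_pow_atTop_nhds_zero_of_lt_one (by norm_num) (by norm_num)
    filter_upwards [htend.eventually (eventually_lt_nhds (by linarith : (0:ℝ) < y - x))] with n hn
    rw [Int.le_floor]
    have h1' := (Int.ceil_lt_add_one (x * 2^n)).le
    nlinarith [hhalf n, h2n n]
  have htend : Tendsto (fun n : ℕ => ((1:ℝ)/2)^n) atTop (𝓝 0) :=
    tendsto_pow_atTop_nhds_zero_of_lt_one (by norm_num) (by norm_num)
  have tendA : Tendsto A atTop (𝓝 x) := by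
    have h1' : Tendsto (fun n : ℕ => x + (1/2:ℝ)^n) atTop (𝓝 x) := by
      simpa using tendsto_const_nhds.add htend
    exact tendsto_of_tendsto_of_tendsto_of_le_of_le tendsto_const_nhds h1' hxA hAx
  have tendB : Tendsto B atTop (𝓝 y) := by
    have h1' : Tendsto (fun n : ℕ => y - (1/2:ℝ)^n) atTop (𝓝 y) := by
      simpa using tendsto_const_nhds.sub htend
    exact tendsto_of_tendsto_of_tendsto_of_le_of_le h1' tendsto_const_nhds hyB hBy
  have hABle : ∀ᶠ n in atTop, A n ≤ B n := by
    filter_upwards [hev] with n hn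
    simp only [hA, hB]
    have h' : ((⌈x * 2^n⌉:ℤ):ℝ) ≤ ((⌊y * 2^n⌋:ℤ):ℝ) := by exact_mod_cast hn
    gcongr
  have memA : ∀ᶠ n in atTop, A n ∈ Icc (0:ℝ) 1 := by
    filter_upwards [hABle] with n hn
    exact ⟨le_trans hx.1 (hxA n), le_trans hn (le_trans (hBy n) hy.2)⟩
  have memB : ∀ᶠ n in atTop, B n ∈ Icc (0:ℝ) 1 := by
    filter_upwards [hABle] with n hn
    exact ⟨le_trans hx.1 (le_trans (hxA n) hn), le_trans (hBy n) hy.2⟩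
  have tendLA : Tendsto (fun n => L (A n)) atTop (𝓝 (L x)) :=
    ((hc x hx).tendsto).comp (tendsto_nhdsWithin_iff.mpr ⟨tendA, memA⟩)
  have tendLB : Tendsto (fun n => L (B n)) atTop (𝓝 (L y)) :=
    ((hc y hy).tendsto).comp (tendsto_nhdsWithin_iff.mpr ⟨tendB, memB⟩)
  refine le_of_tendsto_of_tendsto tendLA tendLB ?_
  filter_upwards [hev] with n hn
  have hcx : (0:ℤ) ≤ ⌈x * 2^n⌉ := Int.ceil_nonneg (by nlinarith [h2n n, hx.1])
  have hfy : (0:ℤ) ≤ ⌊y * 2^n⌋ := le_trans hcx hn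
  set p : ℕ := ⌈x * 2^n⌉.toNat with hp
  set q : ℕ := ⌊y * 2^n⌋.toNat with hq
  have hpc : ((p:ℝ)) = ((⌈x * 2^n⌉ : ℤ):ℝ) := by
    rw [hp]; exact_mod_cast Int.toNat_of_nonneg hcx
  have hqc : ((q:ℝ)) = ((⌊y * 2^n⌋ : ℤ):ℝ) := by
    rw [hq]; exact_mod_cast Int.toNat_of_nonneg hfy
  have hq2 : q ≤ 2^n := by
    have h3 : ⌊y * 2^n⌋ ≤ (2^n : ℤ) := by
      rw [show ((2:ℤ)^n) = ⌊(((2:ℤ)^n : ℤ):ℝ)⌋ from (Int.floor_intCast _).symm]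
      apply Int.floor_le_floor
      push_cast
      nlinarith [h2n n, hy.2]
    exact Int.toNat_le.mpr (by push_cast; exact_mod_cast h3)
  have hpq : p ≤ q := Int.toNat_le_toNat hn
  have := myMonoDyadic ha0 ha1 h1 h2 n q hq2 p hpq
  rw [hpc, hqc] at this
  exact this

end Aux

theorem right_deriv_top_at_dyadic (a : ℝ) (ha0 : 1/2 < a) (ha1 : a < 1)
    (L : ℝ → ℝ) (hL : deRham a L)
    (x : ℝ) (j N : ℕ) (hx : x = (j : ℝ) / 2 ^ N) (hx1 : x < 1) :
    Tendsto (fun h : ℝ => (L (x+h) - L x) / h) (𝓝[>] 0) atTop := by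
  obtain ⟨hc, h1, h2⟩ := hL
  have monoL := myMonoL ha0 ha1 hc h1 h2
  have Dgeom := myDgeom h1 h2
  have Dpos := myDpos ha0 ha1 h1 h2
  have ha : 0 < a := by linarith
  have h2N : (0:ℝ) < 2^N := by positivity
  have hj : j < 2^N := by
    rw [hx, div_lt_one h2N] at hx1
    exact_mod_cast hx1
  have hj1 : ((j:ℝ) + 1) ≤ 2^N := by exact_mod_cast Nat.succ_le_of_lt hj
  have hx0 : 0 ≤ x := by rw [hx]; positivity
  set ΔN : ℝ := L ((j+1)/2^N) - L ((j:ℝ)/2^N) with hΔN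
  have hΔ : 0 < ΔN := Dpos N j hj
  clear_value ΔN
  rw [tendsto_atTop]
  intro C
  have T : Tendsto (fun k : ℕ => (2*a)^k * ((2:ℝ)^N * a * ΔN)) atTop atTop :=
    (tendsto_pow_atTop_atTop_of_one_lt (by linarith : (1:ℝ) < 2*a)).atTop_mul_const
      (by positivity)
  obtain ⟨k₀, hk₀⟩ := (T.eventually_ge_atTop C).exists_forall_of_atTop
  have hmem : (0:ℝ) ∈ Ico (0:ℝ) (1/2^(N+k₀)) := ⟨le_refl _, by positivity⟩
  filter_upwards [Ioc_mem_nhdsGT_of_mem hmem] with h hh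
  obtain ⟨h0, hle⟩ := hh
  have hex : ∃ k : ℕ, (1:ℝ)/2^(N+k+1) < h := by
    obtain ⟨M, hM⟩ := exists_pow_lt_of_lt_one h0 (show (1:ℝ)/2 < 1 by norm_num)
    refine ⟨M, lt_of_le_of_lt ?_ hM⟩
    rw [div_pow, one_pow]
    apply div_le_div_of_nonneg_left (by norm_num) (by positivity)
    apply pow_le_pow_right₀ (by norm_num)
    omega
  set k := Nat.find hex with hkdef
  have hk : (1:ℝ)/2^(N+k+1) < h := Nat.find_spec hex
  have hk' : h ≤ (1:ℝ)/2^(N+k) := by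
    rcases Nat.eq_zero_or_pos k with hk0 | hkpos
    · rw [hk0]
      calc h ≤ 1/2^(N+k₀) := hle
        _ ≤ 1/2^(N+0) := by
          apply div_le_div_of_nonneg_left (by norm_num) (by positivity)
          apply pow_le_pow_right₀ (by norm_num); omega
    · have := Nat.find_min hex (show k - 1 < k by omega)
      push_neg at this
      have e : N + (k-1) + 1 = N + k := by omega
      rwa [e] at this
  have hkk₀ : k₀ ≤ k := by
    by_contra hcon
    push_neg at hcon
    have : (1:ℝ)/2^(N+k+1) ≥ 1/2^(N+k₀) := by
      apply div_le_div_of_nonneg_left (by norm_num) (by positivity)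
      apply pow_le_pow_right₀ (by norm_num); omega
    linarith
  have hgeom := Dgeom N j hj (k+1)
  rw [← Nat.add_assoc] at hgeom
  have hxrep : x = ((j:ℝ) * 2^(k+1)) / 2^(N+k+1) := by
    rw [hx, show N+k+1 = N+(k+1) from rfl, pow_add (2:ℝ) N (k+1)]
    field_simp
    try ring
  have hxrep1 : x + 1/2^(N+k+1) = ((j:ℝ) * 2^(k+1) + 1) / 2^(N+k+1) := by
    rw [hxrep]; ring
  have hxh1 : x + h ≤ 1 := by
    have hhN : h ≤ 1/2^N := le_trans hle (by
      apply div_le_div_of_nonneg_left (by norm_num) (by positivity)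
      apply pow_le_pow_right₀ (by norm_num); omega)
    have e1 : x + h ≤ ((j:ℝ)+1)/2^N := by
      rw [hx, add_div]
      linarith
    have e2 : ((j:ℝ)+1)/2^N ≤ 1 := by
      rw [div_le_one h2N]; exact hj1
    linarith
  have hmono : L (x + 1/2^(N+k+1)) ≤ L (x + h) := by
    apply monoL _ ⟨by positivity, ?_⟩ _ ⟨by positivity, hxh1⟩ ?_
    · calc x + 1/2^(N+k+1) ≤ x + h := by linarith
        _ ≤ 1 := hxh1
    · linarith
  have hdiff : a^(k+1) * ΔN ≤ L (x+h) - L x := by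
    have := hgeom
    rw [← hxrep1, ← hxrep, ← hΔN] at this
    linarith [hmono, this.ge, this.le]
  have hδpos : 0 < a^(k+1) * ΔN := by positivity
  have h2NK : (0:ℝ) < 2^(N+k) := by positivity
  have hh2 : h * 2^(N+k) ≤ 1 := by
    rw [← le_div_iff₀ h2NK]
    exact hk'
  calc C ≤ (2*a)^k * ((2:ℝ)^N * a * ΔN) := hk₀ k hkk₀
    _ = 2^(N+k) * (a^(k+1) * ΔN) := by
        rw [mul_pow, pow_add, pow_succ]; ring
    _ ≤ (a^(k+1) * ΔN) / h := by
        rw [le_div_iff₀ h0]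
        nlinarith [hδpos, hh2]
    _ ≤ (L (x+h) - L x) / h := by gcongr
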